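/- Let O(x) = E[(e^{L_T} − e^x)_+] for x ≥ 0 and O(x) = E[(e^x − e^{L_T})_+] for x < 0, where L_T is a random variable with E[e^{L_T}] = 1 and E[e^{2L_T}] < ∞, and let φ_T(z) = E[e^{izL_T}] extended to the strip Im z ∈ [−1, 0]. Then O ∈ L¹(ℝ) and its Fourier transform satisfies ℱO(u) = (1 − φ_T(u − i)) / (u(u − i)) for all real u ≠ 0. -/

import Mathlib

open MeasureTheory Complex

noncomputable def CMk (x ℓ : ℝ) : ℝ :=
  if 0 ≤ x then max (Real.exp ℓ - Real.exp x) 0 else max (Real.exp x - Real.exp ℓ) 0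

lemma CMk_meas : Measurable fun p : ℝ × ℝ => CMk p.1 p.2 := by
  unfold CMk
  apply Measurable.ite (measurableSet_le measurable_const measurable_fst)
  · exact ((Real.measurable_exp.comp measurable_snd).sub
      (Real.measurable_exp.comp measurable_fst)).max measurable_const
  · exact ((Real.measurable_exp.comp measurable_fst).sub
      (Real.measurable_exp.comp measurable_snd)).max measurable_const

lemma CMk_nonneg (x ℓ : ℝ) : 0 ≤ CMk x ℓ := by
  unfold CMk; split <;> exact le_max_right _ _

lemma CMk_le (x ℓ : ℝ) : CMk x ℓ ≤ Real.exp (-|x|) * (Real.exp (2 * ℓ) + 1) := by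
  unfold CMk
  split_ifs with h
  · rw [_root_.abs_of_nonneg h]
    apply max_le
    · rcases le_or_gt x ℓ with hxl | hxl
      · have h2 : Real.exp ℓ ≤ Real.exp (-x) * Real.exp (2 * ℓ) := by
          rw [← Real.exp_add]; exact Real.exp_le_exp.mpr (by linarith)
        nlinarith [Real.exp_pos x, Real.exp_pos (-x)]
      · have := Real.exp_le_exp.mpr hxl.le
        nlinarith [Real.exp_pos (-x), Real.exp_pos (2 * ℓ)]
    · positivity
  · push_neg at h
    rw [_root_.abs_of_neg h, neg_neg]
    apply max_le
    · nlinarith [Real.exp_pos ℓ, Real.exp_pos x, Real.exp_pos (2 * ℓ)]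
    · positivity

lemma integrable_exp_neg_abs' : Integrable (fun x : ℝ => Real.exp (-|x|)) := by
  rw [← integrableOn_univ, ← Set.Iic_union_Ioi (a := (0 : ℝ))]
  apply IntegrableOn.union
  · exact (integrableOn_exp_Iic 0).congr_fun
      (fun x hx => by rw [_root_.abs_of_nonpos (Set.mem_Iic.mp hx), neg_neg]) measurableSet_Iic
  · exact (exp_neg_integrableOn_Ioi 0 one_pos).congr_fun
      (fun x hx => by rw [_root_.abs_of_pos (Set.mem_Ioi.mp hx)]; ring_nf) measurableSet_Ioi

lemma CMk_inner (u : ℝ) (hu : u ≠ 0) (ℓ : ℝ) :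
    (∫ x : ℝ, Complex.exp (I * (u : ℂ) * (x : ℂ)) * (CMk x ℓ : ℂ)) =
      Complex.exp ((I * u + 1) * ℓ) / ((I * u) * (I * u + 1))
        - Complex.exp (ℓ : ℂ) / (I * u) + 1 / (I * u + 1) := by
  have hIu : I * (u : ℂ) ≠ 0 := mul_ne_zero I_ne_zero (ofReal_ne_zero.mpr hu)
  have hIu1 : I * (u : ℂ) + 1 ≠ 0 := by
    intro h
    have := congrArg Complex.re h
    simp [Complex.add_re, Complex.mul_re] at this
  have h0 : ∀ᵐ x : ℝ, x ≠ 0 := by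
    rw [ae_iff]
    simp only [not_not, Set.setOf_eq_eq_singleton]
    exact Real.volume_singleton
  have hsplit : Complex.exp ((I * u + 1) * ℓ)
      = Complex.exp (I * u * ℓ) * Complex.exp (ℓ : ℂ) := by
    rw [← Complex.exp_add]; ring_nf
  rcases le_or_gt 0 ℓ with hℓ | hℓ
  · -- case 0 ≤ ℓ
    have heq : ∀ x : ℝ, x ≠ 0 → Complex.exp (I * u * x) * (CMk x ℓ : ℂ) =
        Set.indicator (Set.Ioc 0 ℓ)
          (fun x : ℝ => Complex.exp (I * u * x) * ((Real.exp ℓ - Real.exp x : ℝ) : ℂ)) x := by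
      intro x hx
      unfold CMk
      rcases lt_or_gt_of_ne hx with hneg | hpos
      · rw [if_neg (not_le.mpr hneg), Set.indicator_of_notMem (by simp [hneg.le, not_lt.mpr hneg.le])]
        have : Real.exp x - Real.exp ℓ ≤ 0 := by
          have := Real.exp_le_exp.mpr (le_trans hneg.le hℓ); linarith
        simp [max_eq_right this]
      · rw [if_pos hpos.le]
        rcases le_or_gt x ℓ with hxl | hxl
        · rw [Set.indicator_of_mem (Set.mem_Ioc.mpr ⟨hpos, hxl⟩),
            max_eq_left (by have := Real.exp_le_exp.mpr hxl; linarith)]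
        · rw [Set.indicator_of_notMem (by simp [not_le.mpr hxl, hxl])]
          rw [max_eq_right (by have := Real.exp_le_exp.mpr hxl.le; linarith)]
          simp
    have hae : (fun x : ℝ => Complex.exp (I * u * x) * (CMk x ℓ : ℂ)) =ᵐ[volume]
        Set.indicator (Set.Ioc 0 ℓ)
          (fun x : ℝ => Complex.exp (I * u * x) * ((Real.exp ℓ - Real.exp x : ℝ) : ℂ)) := by
      filter_upwards [h0] with x hx using heq x hx
    rw [integral_congr_ae hae, integral_indicator measurableSet_Ioc,
      ← intervalIntegral.integral_of_le hℓ]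
    have hpt : ∀ x : ℝ, Complex.exp (I * u * x) * ((Real.exp ℓ - Real.exp x : ℝ) : ℂ) =
        (Real.exp ℓ : ℂ) * Complex.exp (I * u * x) - Complex.exp ((I * u + 1) * x) := by
      intro x
      have hx : Complex.exp ((I * u + 1) * x)
          = Complex.exp (I * u * x) * Complex.exp (x : ℂ) := by
        rw [← Complex.exp_add]; ring_nf
      simp only [Complex.ofReal_sub, Complex.ofReal_exp]
      rw [hx]; ring
    simp only [hpt]
    have hc1 : Continuous fun x : ℝ => (Real.exp ℓ : ℂ) * Complex.exp (I * u * x) := by fun_prop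
    have hc2 : Continuous fun x : ℝ => Complex.exp ((I * u + 1) * x) := by fun_prop
    rw [intervalIntegral.integral_sub (hc1.intervalIntegrable _ _) (hc2.intervalIntegrable _ _),
      intervalIntegral.integral_const_mul, integral_exp_mul_complex hIu,
      integral_exp_mul_complex hIu1]
    rw [hsplit, Complex.ofReal_exp]
    push_cast
    rw [mul_zero, mul_zero, Complex.exp_zero]
    have huC : (u : ℂ) ≠ 0 := ofReal_ne_zero.mpr hu
    field_simp
    ring
  · -- case ℓ < 0
    have heq : ∀ x : ℝ, x ≠ 0 → Complex.exp (I * u * x) * (CMk x ℓ : ℂ) =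
        Set.indicator (Set.Ioc ℓ 0)
          (fun x : ℝ => Complex.exp (I * u * x) * ((Real.exp x - Real.exp ℓ : ℝ) : ℂ)) x := by
      intro x hx
      unfold CMk
      rcases lt_or_gt_of_ne hx with hneg | hpos
      · rw [if_neg (not_le.mpr hneg)]
        rcases le_or_gt x ℓ with hxl | hxl
        · rw [Set.indicator_of_notMem (by simp [not_lt.mpr hxl])]
          rw [max_eq_right (by have := Real.exp_le_exp.mpr hxl; linarith)]
          simp
        · rw [Set.indicator_of_mem (Set.mem_Ioc.mpr ⟨hxl, hneg.le⟩),
            max_eq_left (by have := Real.exp_le_exp.mpr hxl.le; linarith)]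
      · rw [if_pos hpos.le, Set.indicator_of_notMem (by simp [not_le.mpr hpos])]
        have : Real.exp ℓ - Real.exp x ≤ 0 := by
          have := Real.exp_le_exp.mpr (le_trans hℓ.le hpos.le); linarith
        simp [max_eq_right this]
    have hae : (fun x : ℝ => Complex.exp (I * u * x) * (CMk x ℓ : ℂ)) =ᵐ[volume]
        Set.indicator (Set.Ioc ℓ 0)
          (fun x : ℝ => Complex.exp (I * u * x) * ((Real.exp x - Real.exp ℓ : ℝ) : ℂ)) := by
      filter_upwards [h0] with x hx using heq x hx
    rw [integral_congr_ae hae, integral_indicator measurableSet_Ioc,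
      ← intervalIntegral.integral_of_le hℓ.le]
    have hpt : ∀ x : ℝ, Complex.exp (I * u * x) * ((Real.exp x - Real.exp ℓ : ℝ) : ℂ) =
        Complex.exp ((I * u + 1) * x) - (Real.exp ℓ : ℂ) * Complex.exp (I * u * x) := by
      intro x
      have hx : Complex.exp ((I * u + 1) * x)
          = Complex.exp (I * u * x) * Complex.exp (x : ℂ) := by
        rw [← Complex.exp_add]; ring_nf
      simp only [Complex.ofReal_sub, Complex.ofReal_exp]
      rw [hx]; ring
    simp only [hpt]
    have hc1 : Continuous fun x : ℝ => (Real.exp ℓ : ℂ) * Complex.exp (I * u * x) := by fun_prop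
    have hc2 : Continuous fun x : ℝ => Complex.exp ((I * u + 1) * x) := by fun_prop
    rw [intervalIntegral.integral_sub (hc2.intervalIntegrable _ _) (hc1.intervalIntegrable _ _),
      intervalIntegral.integral_const_mul, integral_exp_mul_complex hIu,
      integral_exp_mul_complex hIu1]
    rw [hsplit, Complex.ofReal_exp]
    push_cast
    rw [mul_zero, mul_zero, Complex.exp_zero]
    have huC : (u : ℂ) ≠ 0 := ofReal_ne_zero.mpr hu
    field_simp
    ring

/-- Carr–Madan pricing formula: with `O` the option function of `L_T`
(satisfying the martingale condition `E[e^{L_T}] = 1` and `E[e^{2L_T}] < ∞`),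
`O ∈ L¹(ℝ)` and `ℱO(u) = (1 − φ_T(u−i))/(u(u−i))` for `u ≠ 0`, where
`φ_T(u−i) = E[e^{(iu+1)L_T}]`. -/
theorem stmt10 (Ω : Type*) [MeasurableSpace Ω] (P : Measure Ω) [IsProbabilityMeasure P]
    (L : Ω → ℝ) (hL : Measurable L)
    (hmart : (∫ ω, Real.exp (L ω) ∂P) = 1)
    (hmom : Integrable (fun ω => Real.exp (2 * L ω)) P)
    (O : ℝ → ℝ)
    (hO : ∀ x : ℝ, O x = if 0 ≤ x then ∫ ω, max (Real.exp (L ω) - Real.exp x) 0 ∂P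
      else ∫ ω, max (Real.exp x - Real.exp (L ω)) 0 ∂P) :
    Integrable O ∧ ∀ u : ℝ, u ≠ 0 →
      (∫ x : ℝ, Complex.exp (I * (u : ℂ) * (x : ℂ)) * (O x : ℂ)) =
        (1 - ∫ ω, Complex.exp ((I * (u : ℂ) + 1) * (L ω : ℂ)) ∂P) /
          ((u : ℂ) * ((u : ℂ) - I)) := by
  -- O as integral of CMk
  have hofReal : ∀ (g : Ω → ℝ), ((∫ ω, g ω ∂P : ℝ) : ℂ) = ∫ ω, ((g ω : ℝ) : ℂ) ∂P :=
    fun g => integral_ofReal.symm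
  have hOeq : ∀ x : ℝ, O x = ∫ ω, CMk x (L ω) ∂P := by
    intro x
    rw [hO x]
    unfold CMk
    split_ifs <;> rfl
  -- integrability of the dominating function on the product
  have hGmeas : Measurable fun p : ℝ × Ω => CMk p.1 (L p.2) :=
    CMk_meas.comp (measurable_fst.prodMk (hL.comp measurable_snd))
  have hdom : Integrable (fun p : ℝ × Ω => Real.exp (-|p.1|) * (Real.exp (2 * L p.2) + 1))
      ((volume : Measure ℝ).prod P) :=
    integrable_exp_neg_abs'.mul_prod (hmom.add (integrable_const 1))
  have hGint : Integrable (fun p : ℝ × Ω => CMk p.1 (L p.2)) ((volume : Measure ℝ).prod P) := by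
    refine hdom.mono' hGmeas.aestronglyMeasurable ?_
    refine Filter.Eventually.of_forall fun p => ?_
    rw [Real.norm_eq_abs, _root_.abs_of_nonneg (CMk_nonneg _ _)]
    exact CMk_le _ _
  have hOint : Integrable O := by
    have := hGint.integral_prod_left
    refine this.congr ?_
    exact Filter.Eventually.of_forall fun x => (hOeq x).symm
  refine ⟨hOint, fun u hu => ?_⟩
  have hIu : I * (u : ℂ) ≠ 0 := mul_ne_zero I_ne_zero (ofReal_ne_zero.mpr hu)
  have hIu1 : I * (u : ℂ) + 1 ≠ 0 := by
    intro h
    have := congrArg Complex.re h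
    simp [Complex.add_re, Complex.mul_re] at this
  have huC : (u : ℂ) ≠ 0 := ofReal_ne_zero.mpr hu
  have huI : (u : ℂ) - I ≠ 0 := by
    intro h
    have := congrArg Complex.im h
    simp at this
  -- integrability of exp(L)
  have hexpL : Integrable (fun ω => Real.exp (L ω)) P := by
    refine (hmom.add (integrable_const 1)).mono' (Real.measurable_exp.comp hL).aestronglyMeasurable ?_
    refine Filter.Eventually.of_forall fun ω => ?_
    rw [Real.norm_eq_abs, _root_.abs_of_nonneg (Real.exp_pos _).le]
    simp only [Pi.add_apply]
    rcases le_or_gt (L ω) 0 with h | h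
    · have := Real.exp_le_one_iff.mpr h
      linarith [Real.exp_pos (2 * L ω)]
    · have := Real.exp_le_exp.mpr (by linarith : L ω ≤ 2 * L ω)
      linarith
  -- product integrability of the Fourier integrand
  have hFint : Integrable (Function.uncurry fun (x : ℝ) (ω : Ω) =>
      Complex.exp (I * (u : ℂ) * (x : ℂ)) * (CMk x (L ω) : ℂ)) ((volume : Measure ℝ).prod P) := by
    refine hdom.mono' ?_ ?_
    · apply Measurable.aestronglyMeasurable
      exact (Complex.measurable_exp.comp
        ((measurable_const.mul (Complex.measurable_ofReal.comp measurable_fst)))).mul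
        (Complex.measurable_ofReal.comp hGmeas)
    · refine Filter.Eventually.of_forall fun p => ?_
      have h1 : ‖Complex.exp (I * (u : ℂ) * (p.1 : ℂ))‖ = 1 := by
        rw [Complex.norm_exp]
        simp [Complex.mul_re]
      rw [Function.uncurry, norm_mul, h1, one_mul, Complex.norm_real, Real.norm_eq_abs,
        _root_.abs_of_nonneg (CMk_nonneg _ _)]
      exact CMk_le _ _
  -- pass to the double integral and swap
  have step1 : (∫ x : ℝ, Complex.exp (I * (u : ℂ) * (x : ℂ)) * (O x : ℂ)) =
      ∫ x : ℝ, ∫ ω, Complex.exp (I * (u : ℂ) * (x : ℂ)) * (CMk x (L ω) : ℂ) ∂P := by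
    congr 1
    funext x
    rw [hOeq x, hofReal, MeasureTheory.integral_const_mul]
  rw [step1, MeasureTheory.integral_integral_swap hFint]
  -- compute the inner integral
  have step2 : ∀ ω, (∫ x : ℝ, Complex.exp (I * (u : ℂ) * (x : ℂ)) * (CMk x (L ω) : ℂ)) =
      Complex.exp ((I * u + 1) * (L ω)) / ((I * u) * (I * u + 1))
        - Complex.exp ((L ω : ℝ) : ℂ) / (I * u) + 1 / (I * u + 1) :=
    fun ω => CMk_inner u hu (L ω)
  simp only [step2]
  -- integrability of the pieces
  have hint1 : Integrable (fun ω => Complex.exp ((I * (u : ℂ) + 1) * ((L ω : ℝ) : ℂ))) P := by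
    refine hexpL.mono' ?_ ?_
    · exact (Complex.measurable_exp.comp
        (measurable_const.mul (Complex.measurable_ofReal.comp hL))).aestronglyMeasurable
    · refine Filter.Eventually.of_forall fun ω => ?_
      rw [Complex.norm_exp]
      simp [Complex.add_re, Complex.mul_re, Real.norm_eq_abs, _root_.abs_of_nonneg (Real.exp_pos _).le]
  have hint2 : Integrable (fun ω => Complex.exp (((L ω : ℝ)) : ℂ)) P := by
    refine hexpL.mono' ?_ ?_
    · exact (Complex.measurable_exp.comp
        (Complex.measurable_ofReal.comp hL)).aestronglyMeasurable
    · refine Filter.Eventually.of_forall fun ω => ?_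
      rw [Complex.norm_exp]
      simp [Real.norm_eq_abs, _root_.abs_of_nonneg (Real.exp_pos _).le]
  have hEcexpL : (∫ ω, Complex.exp (((L ω : ℝ)) : ℂ) ∂P) = 1 := by
    have : (fun ω => Complex.exp (((L ω : ℝ)) : ℂ)) = fun ω => ((Real.exp (L ω) : ℝ) : ℂ) := by
      funext ω; rw [Complex.ofReal_exp]
    rw [this, ← hofReal, hmart, Complex.ofReal_one]
  have hi3 : Integrable (fun ω => Complex.exp ((I * (u : ℂ) + 1) * ((L ω : ℝ) : ℂ)) /
      ((I * u) * (I * u + 1)) - Complex.exp (((L ω : ℝ)) : ℂ) / (I * u)) P :=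
    (hint1.div_const _).sub (hint2.div_const _)
  rw [MeasureTheory.integral_add hi3 (integrable_const _),
    MeasureTheory.integral_sub (hint1.div_const _) (hint2.div_const _),
    MeasureTheory.integral_div, MeasureTheory.integral_div, MeasureTheory.integral_const,
    hEcexpL]
  simp only [probReal_univ, one_smul]
  have huu : (u : ℂ) * ((u : ℂ) - I) = -((I * (u : ℂ)) * (I * (u : ℂ) + 1)) := by
    linear_combination ((u : ℂ) ^ 2) * Complex.I_mul_I
  rw [huu]
  generalize (∫ ω, Complex.exp ((I * (u : ℂ) + 1) * ((L ω : ℝ) : ℂ)) ∂P) = φ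
  generalize hz : I * (u : ℂ) = z at hIu hIu1 ⊢
  field_simp
  ring
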